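/- If G is a simple graph with at least 2 vertices and |E(G)| ≥ (2/3)·C(|V(G)|,2), then G has a connected component G' with |V(G')| > (2/3)|V(G)| and moreover α(G') + 1 ≤ 2|V(G')| − |V(G)|, where α(G') denotes the independence number of G'. -/

import Mathlib

open Finset SimpleGraph

theorem big_component_small_independence {V : Type*} [Fintype V] [DecidableEq V]
    (G : SimpleGraph V) [DecidableRel G.Adj]
    (hV : 2 ≤ Fintype.card V)
    (hE : 3 * G.edgeFinset.card ≥ 2 * (Fintype.card V).choose 2) :
    ∃ c : G.ConnectedComponent,
      3 * c.supp.ncard > 2 * Fintype.card V ∧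
      ∀ s : Finset V, ↑s ⊆ c.supp → (∀ x ∈ s, ∀ y ∈ s, ¬ G.Adj x y) →
        s.card + 1 + Fintype.card V ≤ 2 * c.supp.ncard := by
  classical
  set n := Fintype.card V with hn
  have hne : Nonempty V := Fintype.card_pos_iff.mp (by omega)
  have hcne : Nonempty G.ConnectedComponent := hne.map G.connectedComponentMk
  obtain ⟨c, hmax⟩ := Finite.exists_max (fun d : G.ConnectedComponent => d.supp.ncard)
  set m := c.supp.ncard with hm
  have hmn : m ≤ n := by
    have := Set.ncard_le_ncard (Set.subset_univ c.supp) (Set.toFinite _)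
    simpa [Set.ncard_univ, Nat.card_eq_fintype_card] using this
  have h2c : 2 * n.choose 2 = n * (n - 1) := by
    rw [Nat.choose_two_right, Nat.two_mul_div_two_of_even (Nat.even_mul_pred_self n)]
  -- key inequality for any independent set in c.supp
  have key : ∀ s : Finset V, ↑s ⊆ c.supp → (∀ x ∈ s, ∀ y ∈ s, ¬ G.Adj x y) →
      2 * (n * (n - 1)) + 3 * (n * (n - m) + s.card * (s.card - 1)) ≤ 3 * (n * (n - 1)) := by
    intro s hsub hind
    set H : SimpleGraph V :=
      { Adj := fun u v => G.connectedComponentMk u ≠ G.connectedComponentMk v ∨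
          (u ∈ s ∧ v ∈ s ∧ u ≠ v)
        symm := by
          constructor
          intro u v h
          rcases h with h | ⟨h1, h2, h3⟩
          · exact Or.inl (Ne.symm h)
          · exact Or.inr ⟨h2, h1, h3.symm⟩
        loopless := by constructor; intro u h; rcases h with h | ⟨_, _, h⟩ <;> simp_all } with hH
    have hHadj : ∀ u v, H.Adj u v ↔
        (G.connectedComponentMk u ≠ G.connectedComponentMk v ∨ (u ∈ s ∧ v ∈ s ∧ u ≠ v)) := by
      intro u v; rfl
    have hHG : ∀ u v, H.Adj u v → ¬ G.Adj u v := by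
      intro u v h hadj
      rcases h with h | ⟨h1, h2, _⟩
      · exact h (ConnectedComponent.sound hadj.reachable)
      · exact hind u h1 v h2 hadj
    -- e + h ≤ choose
    have hdisj : Disjoint G.edgeFinset H.edgeFinset := by
      rw [Finset.disjoint_left]
      intro e heG heH
      rw [mem_edgeFinset] at heG heH
      induction e with
      | h u v => exact hHG u v heH heG
    have hsubtop : G.edgeFinset ∪ H.edgeFinset ⊆ (⊤ : SimpleGraph V).edgeFinset := by
      intro e he
      rw [Finset.mem_union, mem_edgeFinset, mem_edgeFinset] at he
      rw [mem_edgeFinset]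
      induction e with
      | h u v =>
        rcases he with h | h
        · exact ((SimpleGraph.mem_edgeSet _).mp h).ne
        · exact ((SimpleGraph.mem_edgeSet _).mp h).ne
    have hcard : G.edgeFinset.card + H.edgeFinset.card ≤ n.choose 2 := by
      rw [← Finset.card_union_of_disjoint hdisj]
      calc (G.edgeFinset ∪ H.edgeFinset).card ≤ (⊤ : SimpleGraph V).edgeFinset.card :=
            Finset.card_le_card hsubtop
        _ = n.choose 2 := by rw [card_edgeFinset_top_eq_card_choose_two]
    -- degree lower bound
    have hdeg : ∀ v, (n - m) + (if v ∈ s then s.card - 1 else 0) ≤ H.degree v := by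
      intro v
      set A : Finset V :=
        Finset.univ.filter (fun u => ¬ G.connectedComponentMk u = G.connectedComponentMk v) with hA
      set B : Finset V := if v ∈ s then s.erase v else ∅ with hB
      have hABd : Disjoint A B := by
        rw [Finset.disjoint_left]
        intro u hu huB
        rw [hA, Finset.mem_filter] at hu
        rw [hB] at huB
        by_cases hv : v ∈ s
        · rw [if_pos hv] at huB
          have hu' : u ∈ s := Finset.mem_of_mem_erase huB
          have h1 : G.connectedComponentMk u = c := hsub hu'
          have h2 : G.connectedComponentMk v = c := hsub hv
          exact hu.2 (h1.trans h2.symm)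
        · rw [if_neg hv] at huB; exact absurd huB (Finset.notMem_empty u)
      have hABsub : A ∪ B ⊆ H.neighborFinset v := by
        intro u hu
        rw [SimpleGraph.mem_neighborFinset]
        rcases Finset.mem_union.mp hu with h | h
        · rw [hA, Finset.mem_filter] at h
          exact Or.inl (fun he => h.2 he.symm)
        · rw [hB] at h
          by_cases hv : v ∈ s
          · rw [if_pos hv] at h
            exact Or.inr ⟨hv, Finset.mem_of_mem_erase h, (Finset.ne_of_mem_erase h).symm⟩
          · rw [if_neg hv] at h; exact absurd h (Finset.notMem_empty u)
      have hAcard : n - m ≤ A.card := by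
        have : A = Finset.univ \ Finset.univ.filter
            (fun u => G.connectedComponentMk u = G.connectedComponentMk v) := by
          rw [hA, Finset.filter_not]
        rw [this, Finset.card_sdiff_of_subset (Finset.filter_subset _ _), Finset.card_univ]
        have hfc : (Finset.univ.filter
            (fun u => G.connectedComponentMk u = G.connectedComponentMk v)).card
            = (G.connectedComponentMk v).supp.ncard := by
          rw [Set.ncard_eq_toFinset_card']
          congr 1
          ext u
          simp [ConnectedComponent.mem_supp_iff]
        rw [hfc]
        exact Nat.sub_le_sub_left (hmax _) n
      have hBcard : B.card = (if v ∈ s then s.card - 1 else 0) := by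
        rw [hB]
        by_cases hv : v ∈ s
        · rw [if_pos hv, if_pos hv, Finset.card_erase_of_mem hv]
        · rw [if_neg hv, if_neg hv, Finset.card_empty]
      calc (n - m) + (if v ∈ s then s.card - 1 else 0)
          ≤ A.card + B.card := by rw [hBcard]; exact Nat.add_le_add_right hAcard _
        _ = (A ∪ B).card := (Finset.card_union_of_disjoint hABd).symm
        _ ≤ (H.neighborFinset v).card := Finset.card_le_card hABsub
        _ = H.degree v := (H.card_neighborFinset_eq_degree v)
    have hsum : n * (n - m) + s.card * (s.card - 1) ≤ 2 * H.edgeFinset.card := by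
      rw [← H.sum_degrees_eq_twice_card_edges]
      calc n * (n - m) + s.card * (s.card - 1)
          = ∑ _v : V, (n - m) + ∑ v : V, (if v ∈ s then s.card - 1 else 0) := by
            rw [Finset.sum_const, Finset.card_univ, smul_eq_mul, ← hn]
            congr 1
            rw [Finset.sum_ite_mem, Finset.univ_inter, Finset.sum_const, smul_eq_mul]
        _ = ∑ v : V, ((n - m) + (if v ∈ s then s.card - 1 else 0)) := by
            rw [Finset.sum_add_distrib]
        _ ≤ ∑ v, H.degree v := Finset.sum_le_sum (fun v _ => hdeg v)
    -- combine
    have h6 : 2 * (n * (n - 1)) ≤ 3 * (2 * G.edgeFinset.card) := by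
      rw [← h2c]; omega
    have h7 : 2 * G.edgeFinset.card + 2 * H.edgeFinset.card ≤ n * (n - 1) := by
      rw [← h2c]; omega
    omega
  have key0 := key ∅ (by simp) (by simp)
  simp only [Finset.card_empty] at key0
  -- part 1
  have hpart1 : 3 * m ≥ 2 * n + 1 := by
    by_contra hcon
    push_neg at hcon
    have h1 : n ≤ 3 * (n - m) := by omega
    nlinarith [key0, hV, Nat.sub_le n 1, Nat.sub_add_cancel (le_trans (by omega : 1 ≤ 2) hV)]
  refine ⟨c, by omega, ?_⟩
  intro s hsub hind
  have hk := key s hsub hind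
  by_contra hcon
  push_neg at hcon
  -- move to integers
  have hS : (2 * m : ℕ) ≤ s.card + n := by omega
  have hcast : ((n - m : ℕ) : ℤ) = (n : ℤ) - m := by
    rw [Nat.cast_sub hmn]
  have hScard1 : 1 ≤ s.card := by omega
  have hcast2 : ((s.card - 1 : ℕ) : ℤ) = (s.card : ℤ) - 1 := by
    rw [Nat.cast_sub hScard1]; simp
  have hcast3 : ((n - 1 : ℕ) : ℤ) = (n : ℤ) - 1 := by
    rw [Nat.cast_sub (by omega)]; simp
  have hkz : 2 * ((n : ℤ) * ((n : ℤ) - 1)) + 3 * ((n : ℤ) * ((n : ℤ) - m)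
      + (s.card : ℤ) * ((s.card : ℤ) - 1)) ≤ 3 * ((n : ℤ) * ((n : ℤ) - 1)) := by
    have := hk
    zify [hmn, hScard1, (by omega : 1 ≤ n)] at this
    linarith
  have hSz : (2 * (m : ℤ) - n) ≤ (s.card : ℤ) := by
    have : (2 * m : ℕ) ≤ s.card + n := hS
    zify at this; linarith
  have hNz : (2 : ℤ) ≤ n := by exact_mod_cast hV
  have hMz : (m : ℤ) ≤ n := by exact_mod_cast hmn
  have hPz : 2 * (n : ℤ) + 1 ≤ 3 * m := by exact_mod_cast hpart1
  nlinarith [mul_nonneg (by linarith : (0:ℤ) ≤ (s.card : ℤ) - (2 * m - n))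
      (by linarith : (0:ℤ) ≤ (s.card : ℤ) + (2 * (m:ℤ) - n) - 1),
    sq_nonneg (3 * (m : ℤ) - 2 * n - 1),
    mul_nonneg (by linarith : (0:ℤ) ≤ (n:ℤ)) (by linarith : (0:ℤ) ≤ 3 * (m:ℤ) - 2 * n - 1)]
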